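/- Let N and M be closed subspaces of a complex Hilbert space H in generic position, and let 𝓐 = {T ∈ B(H) : TN ⊆ N, TM ⊆ M}. Then 𝓐 satisfies property (V') if and only if the algebraic sum N + M is a closed subspace of H. -/

import Mathlib

set_option linter.unusedSectionVars false
set_option maxHeartbeats 2000000

noncomputable section

variable {H : Type*} [NormedAddCommGroup H] [InnerProductSpace ℂ H] [CompleteSpace H]

/-- An orthogonal projection: a self-adjoint idempotent bounded operator. -/
def IsOrthoProj (L : H →L[ℂ] H) : Prop := IsSelfAdjoint L ∧ L * L = L

/-- `Lat 𝓐`: the invariant projection lattice of a set of operators. -/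
def latOf (𝓐 : Set (H →L[ℂ] H)) : Set (H →L[ℂ] H) :=
  {L | IsOrthoProj L ∧ ∀ T ∈ 𝓐, (1 - L) * T * L = 0}

/-- `‖ω_{x,y}|_𝓐‖ = sup {|⟨Tx, y⟩| : T ∈ 𝓐, ‖T‖ ≤ 1}`. -/
def omegaNorm (𝓐 : Set (H →L[ℂ] H)) (x y : H) : ℝ :=
  sSup {r : ℝ | ∃ T ∈ 𝓐, ‖T‖ ≤ 1 ∧ r = ‖(inner ℂ (T x) y : ℂ)‖}

/-- Property (V'): property (V) up to a multiplicative constant `c > 0`. -/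
def PropertyV' (𝓐 : Set (H →L[ℂ] H)) : Prop :=
  ∃ c > (0 : ℝ), ∀ x y : H,
    sInf {r : ℝ | ∃ L ∈ latOf 𝓐, r = ‖x - L x‖ ^ 2 + ‖L y‖ ^ 2} ≤ c * omegaNorm 𝓐 x y

namespace Stmt17

local notation "⟪" x ", " y "⟫" => @inner ℂ H _ x y

/-- The algebra of operators leaving both `N` and `M` invariant. -/
def algOf (N M : Submodule ℂ H) : Set (H →L[ℂ] H) :=
  {T : H →L[ℂ] H |
      Set.MapsTo T (N : Set H) (N : Set H) ∧ Set.MapsTo T (M : Set H) (M : Set H)}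

/-! ### Orthogonal projections as endomorphisms -/

/-- The orthogonal projection onto a closed subspace, as an endomorphism of `H`. -/
def Pf (K : Submodule ℂ H) (hK : IsClosed (K : Set H)) : H →L[ℂ] H :=
  haveI := hK.completeSpace_coe
  K.subtypeL ∘L K.orthogonalProjectionOnto

lemma inner_orth {K : Submodule ℂ H} {u w : H} (hu : u ∈ K) (hw : w ∈ Kᗮ) :
    ⟪u, w⟫ = 0 :=
  (Submodule.mem_orthogonal K w).1 hw u hu

lemma inner_orth' {K : Submodule ℂ H} {u w : H} (hu : u ∈ Kᗮ) (hw : w ∈ K) :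
    ⟪u, w⟫ = 0 :=
  inner_eq_zero_symm.1 (inner_orth hw hu)

lemma Pf_mem (K : Submodule ℂ H) (hK : IsClosed (K : Set H)) (z : H) : Pf K hK z ∈ K := by
  haveI := hK.completeSpace_coe
  exact (K.orthogonalProjectionOnto z).2

lemma Pf_eq_self (K : Submodule ℂ H) (hK : IsClosed (K : Set H)) {w : H} (hw : w ∈ K) :
    Pf K hK w = w := by
  haveI := hK.completeSpace_coe
  have := Submodule.orthogonalProjectionOnto_mem_subspace_eq_self (⟨w, hw⟩ : K)
  exact congrArg Subtype.val this

lemma sub_Pf_mem (K : Submodule ℂ H) (hK : IsClosed (K : Set H)) (z : H) :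
    z - Pf K hK z ∈ Kᗮ := by
  haveI := hK.completeSpace_coe
  exact K.sub_starProjection_mem_orthogonal z

lemma norm_Pf_le (K : Submodule ℂ H) (hK : IsClosed (K : Set H)) (z : H) :
    ‖Pf K hK z‖ ≤ ‖z‖ := by
  haveI := hK.completeSpace_coe
  calc ‖Pf K hK z‖ = ‖K.orthogonalProjectionOnto z‖ := rfl
    _ ≤ ‖K.orthogonalProjectionOnto‖ * ‖z‖ := (K.orthogonalProjectionOnto).le_opNorm z
    _ ≤ 1 * ‖z‖ := by
        have := Submodule.orthogonalProjectionOnto_norm_le K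
        have h0 : (0:ℝ) ≤ ‖z‖ := norm_nonneg _
        nlinarith
    _ = ‖z‖ := one_mul _

lemma Pf_pyth (K : Submodule ℂ H) (hK : IsClosed (K : Set H)) (z : H) :
    ‖z‖ ^ 2 = ‖z - Pf K hK z‖ ^ 2 + ‖Pf K hK z‖ ^ 2 := by
  have h0 : ⟪z - Pf K hK z, Pf K hK z⟫ = 0 := inner_orth' (sub_Pf_mem K hK z) (Pf_mem K hK z)
  have h1 : z = (z - Pf K hK z) + Pf K hK z := by abel
  calc ‖z‖ ^ 2 = ‖(z - Pf K hK z) + Pf K hK z‖ ^ 2 := by rw [← h1]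
    _ = ‖z - Pf K hK z‖ ^ 2 + 2 * Complex.re ⟪z - Pf K hK z, Pf K hK z⟫ + ‖Pf K hK z‖ ^ 2 :=
        norm_add_sq (𝕜 := ℂ) _ _
    _ = _ := by rw [h0]; simp

lemma Pf_min (K : Submodule ℂ H) (hK : IsClosed (K : Set H)) {u : H} (hu : u ∈ K) (z : H) :
    ‖z - Pf K hK z‖ ≤ ‖z - u‖ := by
  have h0 : ⟪z - Pf K hK z, Pf K hK z - u⟫ = 0 :=
    inner_orth' (sub_Pf_mem K hK z) (Submodule.sub_mem K (Pf_mem K hK z) hu)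
  have h1 : z - u = (z - Pf K hK z) + (Pf K hK z - u) := by abel
  have h2 : ‖z - u‖ ^ 2 = ‖z - Pf K hK z‖ ^ 2 + ‖Pf K hK z - u‖ ^ 2 := by
    calc ‖z - u‖ ^ 2 = ‖(z - Pf K hK z) + (Pf K hK z - u)‖ ^ 2 := by rw [← h1]
      _ = ‖z - Pf K hK z‖ ^ 2 + 2 * Complex.re ⟪z - Pf K hK z, Pf K hK z - u⟫
            + ‖Pf K hK z - u‖ ^ 2 := norm_add_sq (𝕜 := ℂ) _ _
      _ = _ := by rw [h0]; simp
  nlinarith [norm_nonneg (z - Pf K hK z), norm_nonneg (z - u), sq_nonneg (‖Pf K hK z - u‖)]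

lemma inner_Pf (K : Submodule ℂ H) (hK : IsClosed (K : Set H)) (y : H) :
    ⟪Pf K hK y, y⟫ = ((‖Pf K hK y‖ : ℂ)) ^ 2 := by
  have h1 : ⟪Pf K hK y, y - Pf K hK y⟫ = 0 := inner_orth (Pf_mem K hK y) (sub_Pf_mem K hK y)
  have h2 : ⟪Pf K hK y, y⟫ = ⟪Pf K hK y, Pf K hK y⟫ + ⟪Pf K hK y, y - Pf K hK y⟫ := by
    rw [← inner_add_right]; congr 1; abel
  rw [h2, h1, add_zero, inner_self_eq_norm_sq_to_K]
  norm_num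

lemma inner_self_c (u : H) : ⟪u, u⟫ = ((‖u‖ : ℂ)) ^ 2 := by
  rw [inner_self_eq_norm_sq_to_K]; norm_num

lemma Pf_isOrtho (K : Submodule ℂ H) (hK : IsClosed (K : Set H)) : IsOrthoProj (Pf K hK) := by
  haveI := hK.completeSpace_coe
  constructor
  · exact isSelfAdjoint_starProjection K
  · ext z
    exact Pf_eq_self K hK (Pf_mem K hK z)

/-! ### rank-one operators -/

/-- rank one operator `z ↦ ⟪w, z⟫ • v`. -/
def rk (w v : H) : H →L[ℂ] H := (innerSL ℂ w).smulRight v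

lemma rk_apply (w v z : H) : rk w v z = ⟪w, z⟫ • v := rfl

lemma norm_rk_le (w v : H) : ‖rk w v‖ ≤ ‖w‖ * ‖v‖ := by
  refine ContinuousLinearMap.opNorm_le_bound _ (mul_nonneg (norm_nonneg _) (norm_nonneg _)) ?_
  intro z
  rw [rk_apply, norm_smul]
  calc ‖⟪w, z⟫‖ * ‖v‖ ≤ (‖w‖ * ‖z‖) * ‖v‖ := by
        have := norm_inner_le_norm (𝕜 := ℂ) w z
        have h0 : (0:ℝ) ≤ ‖v‖ := norm_nonneg _
        nlinarith
    _ = ‖w‖ * ‖v‖ * ‖z‖ := by ring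

lemma rk_mem_left {N M : Submodule ℂ H} {v w : H} (hv : v ∈ N) (hw : w ∈ Mᗮ) :
    rk w v ∈ algOf N M := by
  constructor
  · intro z _
    exact Submodule.smul_mem N _ hv
  · intro z hz
    have : ⟪w, z⟫ = 0 := inner_orth' hw hz
    simp only [Set.mem_setOf_eq, SetLike.mem_coe, rk_apply, this, zero_smul]
    exact Submodule.zero_mem M

lemma rk_mem_right {N M : Submodule ℂ H} {v w : H} (hv : v ∈ M) (hw : w ∈ Nᗮ) :
    rk w v ∈ algOf N M := by
  constructor
  · intro z hz
    have : ⟪w, z⟫ = 0 := inner_orth' hw hz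
    simp only [Set.mem_setOf_eq, SetLike.mem_coe, rk_apply, this, zero_smul]
    exact Submodule.zero_mem N
  · intro z _
    exact Submodule.smul_mem M _ hv

lemma zero_mem_alg (N M : Submodule ℂ H) : (0 : H →L[ℂ] H) ∈ algOf N M := by
  constructor <;> · intro z _; simp [Submodule.zero_mem]

/-! ### omegaNorm basic lemmas -/

lemma omega_bddAbove (𝓐 : Set (H →L[ℂ] H)) (x y : H) :
    BddAbove {r : ℝ | ∃ T ∈ 𝓐, ‖T‖ ≤ 1 ∧ r = ‖(inner ℂ (T x) y : ℂ)‖} := by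
  refine ⟨‖x‖ * ‖y‖, ?_⟩
  rintro r ⟨T, _, hT1, rfl⟩
  calc ‖(inner ℂ (T x) y : ℂ)‖ ≤ ‖T x‖ * ‖y‖ := norm_inner_le_norm _ _
    _ ≤ ‖x‖ * ‖y‖ := by
        have h1 : ‖T x‖ ≤ ‖T‖ * ‖x‖ := T.le_opNorm x
        have h2 : (0:ℝ) ≤ ‖x‖ := norm_nonneg _
        have h3 : (0:ℝ) ≤ ‖y‖ := norm_nonneg _
        have h4 : ‖T x‖ ≤ ‖x‖ := le_trans h1 (by nlinarith)
        exact mul_le_mul_of_nonneg_right h4 h3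

lemma le_omega {𝓐 : Set (H →L[ℂ] H)} {T : H →L[ℂ] H} (hT : T ∈ 𝓐) (h1 : ‖T‖ ≤ 1) (x y : H) :
    ‖(inner ℂ (T x) y : ℂ)‖ ≤ omegaNorm 𝓐 x y :=
  le_csSup (omega_bddAbove 𝓐 x y) ⟨T, hT, h1, rfl⟩

lemma omega_nonneg {𝓐 : Set (H →L[ℂ] H)} (h0 : (0 : H →L[ℂ] H) ∈ 𝓐) (x y : H) :
    0 ≤ omegaNorm 𝓐 x y := by
  have := le_omega h0 (by simp) x y
  simpa using this

lemma omega_le {𝓐 : Set (H →L[ℂ] H)} {x y : H} {a : ℝ} (ha : 0 ≤ a)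
    (h : ∀ T ∈ 𝓐, ‖T‖ ≤ 1 → ‖(inner ℂ (T x) y : ℂ)‖ ≤ a) : omegaNorm 𝓐 x y ≤ a := by
  apply Real.sSup_le _ ha
  rintro r ⟨T, hT, h1, rfl⟩
  exact h T hT h1

/-! ### latOf basic lemmas -/

lemma one_mem_lat (𝓐 : Set (H →L[ℂ] H)) : (1 : H →L[ℂ] H) ∈ latOf 𝓐 := by
  refine ⟨⟨(IsSelfAdjoint.one _), one_mul 1⟩, fun T _ => ?_⟩
  simp [sub_self]

lemma zero_mem_lat (𝓐 : Set (H →L[ℂ] H)) : (0 : H →L[ℂ] H) ∈ latOf 𝓐 := by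
  refine ⟨⟨(IsSelfAdjoint.zero _), zero_mul 0⟩, fun T _ => ?_⟩
  simp

lemma PfN_mem_lat (N M : Submodule ℂ H) (hN : IsClosed (N : Set H)) :
    Pf N hN ∈ latOf (algOf N M) := by
  refine ⟨Pf_isOrtho N hN, fun T hT => ?_⟩
  ext z
  have h1 : T (Pf N hN z) ∈ N := hT.1 (Pf_mem N hN z)
  simp only [ContinuousLinearMap.mul_apply, ContinuousLinearMap.sub_apply,
    ContinuousLinearMap.one_apply, ContinuousLinearMap.zero_apply]
  rw [Pf_eq_self N hN h1]
  simp

lemma PfM_mem_lat (N M : Submodule ℂ H) (hM : IsClosed (M : Set H)) :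
    Pf M hM ∈ latOf (algOf N M) := by
  refine ⟨Pf_isOrtho M hM, fun T hT => ?_⟩
  ext z
  have h1 : T (Pf M hM z) ∈ M := hT.2 (Pf_mem M hM z)
  simp only [ContinuousLinearMap.mul_apply, ContinuousLinearMap.sub_apply,
    ContinuousLinearMap.one_apply, ContinuousLinearMap.zero_apply]
  rw [Pf_eq_self M hM h1]
  simp

lemma inf_le_val {𝓐 : Set (H →L[ℂ] H)} {L : H →L[ℂ] H} (hL : L ∈ latOf 𝓐) (x y : H) :
    sInf {r : ℝ | ∃ L ∈ latOf 𝓐, r = ‖x - L x‖ ^ 2 + ‖L y‖ ^ 2}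
      ≤ ‖x - L x‖ ^ 2 + ‖L y‖ ^ 2 := by
  apply csInf_le
  · refine ⟨0, ?_⟩
    rintro r ⟨L', _, rfl⟩
    positivity
  · exact ⟨L, hL, rfl⟩

lemma le_inf {𝓐 : Set (H →L[ℂ] H)} {x y : H} {a : ℝ}
    (h : ∀ L ∈ latOf 𝓐, a ≤ ‖x - L x‖ ^ 2 + ‖L y‖ ^ 2) :
    a ≤ sInf {r : ℝ | ∃ L ∈ latOf 𝓐, r = ‖x - L x‖ ^ 2 + ‖L y‖ ^ 2} := by
  apply le_csInf
  · exact ⟨_, ⟨1, one_mem_lat 𝓐, rfl⟩⟩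
  · rintro r ⟨L, hL, rfl⟩
    exact h L hL

/-! ### auxiliary projection lemma -/

lemma Pf_orth_apply (K : Submodule ℂ H) (hK : IsClosed (K : Set H)) (z : H) :
    Pf Kᗮ K.isClosed_orthogonal z = z - Pf K hK z := by
  haveI := hK.completeSpace_coe
  exact Submodule.starProjection_orthogonal_val z

/-! ### Dichotomies for elements of the invariant projection lattice -/

lemma lat_inner_swap {L : H →L[ℂ] H} (hsa : IsSelfAdjoint L) (w z : H) :
    ⟪L w, z⟫ = ⟪w, L z⟫ := by
  have hstar : star L = L := hsa
  calc ⟪L w, z⟫ = ⟪(ContinuousLinearMap.adjoint L) w, z⟫ := by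
        rw [← ContinuousLinearMap.star_eq_adjoint, hstar]
    _ = ⟪w, L z⟫ := ContinuousLinearMap.adjoint_inner_left L z w

lemma dichot_core {N M : Submodule ℂ H} {L : H →L[ℂ] H} (hL : L ∈ latOf (algOf N M))
    {n₀ w : H} (hmem : rk w n₀ ∈ algOf N M) (hn₀ : L n₀ ≠ n₀) : L w = 0 := by
  have hT := hL.2 (rk w n₀) hmem
  have hz : ∀ z : H, ⟪w, L z⟫ • (n₀ - L n₀) = 0 := by
    intro z
    have h := DFunLike.congr_fun hT z
    simpa [ContinuousLinearMap.mul_apply, ContinuousLinearMap.sub_apply,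
      ContinuousLinearMap.one_apply, rk_apply, map_smul, smul_sub] using h
  have hinner : ∀ z : H, ⟪w, L z⟫ = 0 := by
    intro z
    rcases smul_eq_zero.1 (hz z) with h | h
    · exact h
    · exact absurd (sub_eq_zero.1 h).symm hn₀
  refine ext_inner_right ℂ (fun z => ?_)
  rw [lat_inner_swap hL.1.1, hinner z, inner_zero_left]

lemma dichot1 {N M : Submodule ℂ H} {L : H →L[ℂ] H} (hL : L ∈ latOf (algOf N M)) :
    (∀ n ∈ N, L n = n) ∨ (∀ w ∈ Mᗮ, L w = 0) := by
  by_cases hfix : ∀ n ∈ N, L n = n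
  · exact Or.inl hfix
  · push_neg at hfix
    obtain ⟨n₀, hn₀N, hn₀⟩ := hfix
    exact Or.inr (fun w hw => dichot_core hL (rk_mem_left hn₀N hw) hn₀)

lemma dichot2 {N M : Submodule ℂ H} {L : H →L[ℂ] H} (hL : L ∈ latOf (algOf N M)) :
    (∀ m ∈ M, L m = m) ∨ (∀ w ∈ Nᗮ, L w = 0) := by
  by_cases hfix : ∀ m ∈ M, L m = m
  · exact Or.inl hfix
  · push_neg at hfix
    obtain ⟨m₀, hm₀M, hm₀⟩ := hfix
    exact Or.inr (fun w hw => dichot_core hL (rk_mem_right hm₀M hw) hm₀)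

/-! ### If the sum is not closed, small-angle unit vectors exist -/

lemma exists_small_angle {N M : Submodule ℂ H} (hN : IsClosed (N : Set H))
    (hM : IsClosed (M : Set H))
    (hnc : ¬ IsClosed ((N ⊔ M : Submodule ℂ H) : Set H)) :
    ∀ ρ : ℝ, 0 < ρ → ∃ w, w ∈ Nᗮ ∧ ‖w‖ = 1 ∧ ‖Pf M hM w‖ < ρ := by
  haveI := hN.completeSpace_coe
  haveI := hM.completeSpace_coe
  intro ρ hρ
  by_contra hno
  push_neg at hno
  -- a uniform lower bound on the angle
  set σ : ℝ := min ρ 1 with hσdef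
  have hσpos : 0 < σ := lt_min hρ one_pos
  have hσ1 : σ ≤ 1 := min_le_right _ _
  have hlow : ∀ w ∈ Nᗮ, σ * ‖w‖ ≤ ‖Pf M hM w‖ := by
    intro w hw
    rcases eq_or_ne w 0 with rfl | hw0
    · simp
    · have hnw : (0:ℝ) < ‖w‖ := norm_pos_iff.2 hw0
      have h1 : ((‖w‖ : ℂ)⁻¹ • w) ∈ Nᗮ := Submodule.smul_mem _ _ hw
      have h2 : ‖((‖w‖ : ℂ)⁻¹ • w)‖ = 1 := by
        rw [norm_smul]
        simp [hnw.le, hnw.ne']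
      have h3 := hno _ h1 h2
      have h4 : ‖Pf M hM ((‖w‖ : ℂ)⁻¹ • w)‖ = ‖w‖⁻¹ * ‖Pf M hM w‖ := by
        rw [map_smul, norm_smul]
        simp
      rw [h4] at h3
      have h5 : ρ * ‖w‖ ≤ ‖Pf M hM w‖ := by
        have h5' := mul_le_mul_of_nonneg_left h3 hnw.le
        rw [← mul_assoc, mul_inv_cancel₀ hnw.ne', one_mul] at h5'
        linarith
      have h6 : σ * ‖w‖ ≤ ρ * ‖w‖ := by
        have := min_le_left ρ 1
        nlinarith
      linarith
  -- the coercive operator B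
  set Pn : H →L[ℂ] H := Pf N hN with hPn
  set Pm : H →L[ℂ] H := Pf M hM with hPm
  set Pq : H →L[ℂ] H := Pf Nᗮ N.isClosed_orthogonal with hPq
  set B : H →L[ℂ] H := Pn + Pq ∘L (Pm ∘L Pq) with hB
  have hre : ∀ z : H, σ ^ 2 * ‖z‖ ^ 2 ≤ Complex.re ⟪B z, z⟫ := by
    intro z
    have hBz : B z = Pn z + Pq (Pm (Pq z)) := by
      simp [hB, ContinuousLinearMap.add_apply, ContinuousLinearMap.comp_apply]
    have e1 : ⟪Pn z, z⟫ = ((‖Pn z‖ : ℂ)) ^ 2 := inner_Pf N hN z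
    have e2 : ⟪Pq (Pm (Pq z)), z⟫ = ((‖Pm (Pq z)‖ : ℂ)) ^ 2 := by
      set u' : H := Pm (Pq z) with hu'
      have s1 : ⟪Pq u', z - Pq z⟫ = 0 :=
        inner_orth (Pf_mem Nᗮ N.isClosed_orthogonal u') (sub_Pf_mem Nᗮ N.isClosed_orthogonal z)
      have s2 : ⟪u' - Pq u', Pq z⟫ = 0 :=
        inner_orth' (sub_Pf_mem Nᗮ N.isClosed_orthogonal u') (Pf_mem Nᗮ N.isClosed_orthogonal z)
      have t1 : ⟪Pq u', z⟫ = ⟪Pq u', Pq z⟫ := by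
        have := inner_sub_right (𝕜 := ℂ) (Pq u') z (Pq z)
        rw [s1] at this
        linear_combination -this
      have t2 : ⟪Pq u', Pq z⟫ = ⟪u', Pq z⟫ := by
        have := inner_sub_left (𝕜 := ℂ) u' (Pq u') (Pq z)
        rw [s2] at this
        linear_combination this
      have t3 : ⟪u', Pq z⟫ = ((‖u'‖ : ℂ)) ^ 2 := by
        rw [hu']
        exact inner_Pf M hM (Pq z)
      rw [t1, t2, t3]
    have hsum : Complex.re ⟪B z, z⟫ = ‖Pn z‖ ^ 2 + ‖Pm (Pq z)‖ ^ 2 := by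
      rw [hBz, inner_add_left, e1, e2]
      simp [← Complex.ofReal_pow]
    rw [hsum]
    have hlow2 : σ * ‖Pq z‖ ≤ ‖Pm (Pq z)‖ := hlow _ (Pf_mem Nᗮ N.isClosed_orthogonal z)
    have hpyth : ‖z‖ ^ 2 = ‖Pq z‖ ^ 2 + ‖Pn z‖ ^ 2 := by
      have h1 : Pq z = z - Pn z := Pf_orth_apply N hN z
      have h2 := Pf_pyth N hN z
      rw [h1]
      linarith [h2]
    have k1 : (σ * ‖Pq z‖) ^ 2 ≤ ‖Pm (Pq z)‖ ^ 2 := by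
      nlinarith [hlow2, norm_nonneg (Pm (Pq z)), mul_nonneg hσpos.le (norm_nonneg (Pq z))]
    have hσsq : σ ^ 2 ≤ 1 := by nlinarith [hσpos, hσ1]
    have k2 : σ ^ 2 * ‖Pn z‖ ^ 2 ≤ ‖Pn z‖ ^ 2 := by
      nlinarith [mul_nonneg (by linarith : (0:ℝ) ≤ 1 - σ ^ 2) (sq_nonneg (‖Pn z‖))]
    nlinarith [k1, k2, hpyth]
  have hcoer : ∀ z : H, σ ^ 2 * ‖z‖ ≤ ‖B z‖ := by
    intro z
    rcases eq_or_lt_of_le (norm_nonneg z) with h0 | h0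
    · rw [← h0]; simpa using norm_nonneg (B z)
    · have h1 : σ ^ 2 * ‖z‖ ^ 2 ≤ Complex.re ⟪B z, z⟫ := hre z
      have h2 : Complex.re ⟪B z, z⟫ ≤ ‖⟪B z, z⟫‖ := Complex.re_le_norm _
      have h3 : ‖⟪B z, z⟫‖ ≤ ‖B z‖ * ‖z‖ := norm_inner_le_norm _ _
      have h4 : σ ^ 2 * ‖z‖ * ‖z‖ ≤ ‖B z‖ * ‖z‖ := by nlinarith
      exact le_of_mul_le_mul_right h4 h0
  -- B is surjective
  have hrange : LinearMap.range (B : H →ₗ[ℂ] H) = ⊤ := by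
    have hanti : AntilipschitzWith ⟨(σ ^ 2)⁻¹, by positivity⟩ B := by
      apply B.antilipschitz_of_bound
      intro z
      have h1 : (0:ℝ) < σ ^ 2 := by positivity
      calc ‖z‖ = (σ ^ 2)⁻¹ * (σ ^ 2 * ‖z‖) := by field_simp
        _ ≤ (σ ^ 2)⁻¹ * ‖B z‖ := by
            exact mul_le_mul_of_nonneg_left (hcoer z) (by positivity)
        _ = ↑(⟨(σ ^ 2)⁻¹, by positivity⟩ : NNReal) * ‖B z‖ := rfl
    have hclosed : IsClosed ((LinearMap.range (B : H →ₗ[ℂ] H) : Submodule ℂ H) : Set H) := by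
      have : IsClosed (Set.range B) := hanti.isClosed_range B.uniformContinuous
      simpa [LinearMap.coe_range] using this
    have hdense : (LinearMap.range (B : H →ₗ[ℂ] H)).topologicalClosure = ⊤ := by
      rw [Submodule.topologicalClosure_eq_top_iff]
      rw [Submodule.eq_bot_iff]
      intro u hu
      have h0 : ⟪B u, u⟫ = 0 :=
        (Submodule.mem_orthogonal _ u).1 hu (B u) (LinearMap.mem_range_self (B : H →ₗ[ℂ] H) u)
      have h1 : σ ^ 2 * ‖u‖ ^ 2 ≤ 0 := by
        have := hre u
        rw [h0] at this
        simpa using this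
      have : ‖u‖ = 0 := by
        by_contra hne
        have hpos : 0 < ‖u‖ := lt_of_le_of_ne (norm_nonneg u) (Ne.symm hne)
        nlinarith [pow_pos hσpos 2, pow_pos hpos 2]
      exact norm_eq_zero.1 this
    have heq : (LinearMap.range (B : H →ₗ[ℂ] H)).topologicalClosure = LinearMap.range (B : H →ₗ[ℂ] H) :=
      le_antisymm (Submodule.topologicalClosure_minimal _ le_rfl hclosed)
        (Submodule.le_topologicalClosure _)
    rw [← heq, hdense]
  -- hence N ⊔ M = ⊤, contradicting non-closedness
  have htop : N ⊔ M = ⊤ := by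
    rw [Submodule.eq_top_iff']
    intro z
    obtain ⟨u, hBu⟩ := LinearMap.mem_range.1 (hrange ▸ Submodule.mem_top (x := z))
    set m : H := Pm (Pq u) with hm
    have hmM : m ∈ M := Pf_mem M hM _
    have hnN : z - m ∈ N := by
      have h1 : z = Pn u + Pq m := by
        rw [← hBu]
        simp [hB, ContinuousLinearMap.add_apply, ContinuousLinearMap.comp_apply, hm]
      have h2 : z - m = Pn u - (m - Pq m) := by rw [h1]; abel
      have h3 : m - Pq m ∈ Nᗮᗮ := sub_Pf_mem Nᗮ N.isClosed_orthogonal m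
      rw [Submodule.orthogonal_orthogonal] at h3
      rw [h2]
      exact Submodule.sub_mem N (Pf_mem N hN u) h3
    exact Submodule.mem_sup.2 ⟨z - m, hnN, m, hmM, by abel⟩
  apply hnc
  rw [htop]
  simpa using isClosed_univ

/-! ### Non-closed sum implies failure of property (V') -/

lemma not_V'_of_not_closed {N M : Submodule ℂ H} (hN : IsClosed (N : Set H))
    (hM : IsClosed (M : Set H)) (hg₄ : Nᗮ ⊓ Mᗮ = ⊥)
    (hnc : ¬ IsClosed ((N ⊔ M : Submodule ℂ H) : Set H)) :
    ¬ PropertyV' (algOf N M) := by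
  haveI := hN.completeSpace_coe
  haveI := hM.completeSpace_coe
  rintro ⟨c, hc, hineq⟩
  have hsmall := exists_small_angle hN hM hnc
  set Pn : H →L[ℂ] H := Pf N hN with hPndef
  set Pm : H →L[ℂ] H := Pf M hM with hPmdef
  set Pq : H →L[ℂ] H := Pf Nᗮ N.isClosed_orthogonal with hPqdef
  obtain ⟨w₀, hw₀N, hw₀1, hw₀s⟩ := hsmall (1/10) (by norm_num)
  set R : H →L[ℂ] H := Pq ∘L (Pm ∘L Pq) with hRdef
  -- `w₀` is in the closure of the range of `R`
  set V : Submodule ℂ H := (LinearMap.range (R : H →ₗ[ℂ] H)).topologicalClosure with hVdef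
  have hVc : IsClosed (V : Set H) := Submodule.isClosed_topologicalClosure _
  have hVN : V ≤ Nᗮ := by
    apply Submodule.topologicalClosure_minimal
    · rintro _ ⟨z, rfl⟩
      exact Pf_mem Nᗮ N.isClosed_orthogonal _
    · exact N.isClosed_orthogonal
  have hw₀V : w₀ ∈ V := by
    set d : H := w₀ - Pf V hVc w₀ with hddef
    have hdorth : d ∈ Vᗮ := sub_Pf_mem V hVc w₀
    have hdN : d ∈ Nᗮ := Submodule.sub_mem _ hw₀N (hVN (Pf_mem V hVc w₀))
    have hRd : ⟪R d, d⟫ = 0 :=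
      inner_orth (Submodule.le_topologicalClosure _ (LinearMap.mem_range_self (R : H →ₗ[ℂ] H) d)) hdorth
    have hPmd : Pm d = 0 := by
      have h1 : Pq d = d := Pf_eq_self Nᗮ N.isClosed_orthogonal hdN
      have h2 : R d = Pq (Pm d) := by
        simp only [hRdef, ContinuousLinearMap.comp_apply, h1]
      have s2 : ⟪Pm d - Pq (Pm d), d⟫ = 0 :=
        inner_orth' (sub_Pf_mem Nᗮ N.isClosed_orthogonal (Pm d)) hdN
      have h3 : ⟪Pq (Pm d), d⟫ = ⟪Pm d, d⟫ := by
        have := inner_sub_left (𝕜 := ℂ) (Pm d) (Pq (Pm d)) d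
        rw [s2] at this
        linear_combination this
      have h4 : ⟪Pm d, d⟫ = ((‖Pm d‖ : ℂ)) ^ 2 := inner_Pf M hM d
      have h5 : ((‖Pm d‖ : ℂ)) ^ 2 = 0 := by rw [← h4, ← h3, ← h2, hRd]
      have h6 : ‖Pm d‖ = 0 := by
        have := pow_eq_zero_iff (n := 2) (by norm_num) |>.1 (by exact_mod_cast h5 : ((‖Pm d‖:ℂ)) ^ 2 = 0)
        exact_mod_cast this
      exact norm_eq_zero.1 h6
    have hdM : d ∈ Mᗮ := by
      have := sub_Pf_mem M hM d
      rwa [show Pf M hM d = Pm d from rfl, hPmd, sub_zero] at this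
    have hd0 : d = 0 := by
      have : d ∈ Nᗮ ⊓ Mᗮ := ⟨hdN, hdM⟩
      rwa [hg₄, Submodule.mem_bot] at this
    have : w₀ = Pf V hVc w₀ := by
      have := sub_eq_zero.1 (hddef ▸ hd0)
      exact this
    rw [this]
    exact Pf_mem V hVc w₀
  -- approximate `w₀` from the range of `R`
  have hw₀cl : w₀ ∈ closure (Set.range R) := by
    have h1 : (V : Set H) = closure (LinearMap.range (R : H →ₗ[ℂ] H) : Set H) :=
      Submodule.topologicalClosure_coe _
    have h2 : (LinearMap.range (R : H →ₗ[ℂ] H) : Set H) = Set.range R := by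
      ext z; simp [LinearMap.mem_range]
    have := hw₀V
    rw [← SetLike.mem_coe, h1, h2] at this
    exact this
  obtain ⟨x₀', hx₀mem, hx₀close⟩ := Metric.mem_closure_iff.1 hw₀cl (1/10) (by norm_num)
  obtain ⟨u, rfl⟩ := hx₀mem
  set x₀ : H := R u with hx₀def
  have hdist : ‖w₀ - x₀‖ < 1/10 := by
    rw [← dist_eq_norm]
    exact hx₀close
  have hx₀N : x₀ ∈ Nᗮ := Pf_mem Nᗮ N.isClosed_orthogonal _
  have hx₀norm : 9/10 ≤ ‖x₀‖ := by
    have := abs_norm_sub_norm_le w₀ x₀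
    rw [hw₀1] at this
    have := abs_le.1 this
    linarith [this.1]
  have hPmx₀ : ‖Pm x₀‖ ≤ 2/10 := by
    have h1 : Pm x₀ = Pm w₀ + Pm (x₀ - w₀) := by rw [← map_add]; congr 1; abel
    have h2 : ‖Pm (x₀ - w₀)‖ ≤ ‖x₀ - w₀‖ := norm_Pf_le M hM _
    have h3 : ‖x₀ - w₀‖ = ‖w₀ - x₀‖ := norm_sub_rev _ _
    calc ‖Pm x₀‖ ≤ ‖Pm w₀‖ + ‖Pm (x₀ - w₀)‖ := h1 ▸ norm_add_le _ _
      _ ≤ 2/10 := by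
          have : ‖Pm w₀‖ < 1/10 := hw₀s
          linarith [h2, h3 ▸ hdist]
  have hdistM : 1/2 ≤ ‖x₀ - Pm x₀‖ ^ 2 := by
    have := Pf_pyth M hM x₀
    have h1 : (9/10 : ℝ) ^ 2 ≤ ‖x₀‖ ^ 2 := by nlinarith [hx₀norm]
    have h2 : ‖Pm x₀‖ ^ 2 ≤ (2/10 : ℝ) ^ 2 := by nlinarith [hPmx₀, norm_nonneg (Pm x₀)]
    nlinarith [this]
  -- pick `y` at a very small angle
  set ρ : ℝ := min 1 (1/(2*(c+1)*(‖u‖+1))) with hρdef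
  have hρpos : 0 < ρ := by
    apply lt_min one_pos
    positivity
  obtain ⟨y, hyN, hy1, hys⟩ := hsmall ρ hρpos
  -- the omega norm is very small
  have homega : omegaNorm (algOf N M) x₀ y ≤ ‖u‖ * ρ := by
    apply omega_le (by positivity)
    intro T hT hT1
    set v' : H := Pm (Pq u) with hv'def
    have hv'M : v' ∈ M := Pf_mem M hM _
    have hx₀v' : x₀ = v' - Pn v' := by
      rw [hx₀def, hRdef]
      simp only [ContinuousLinearMap.comp_apply]
      exact Pf_orth_apply N hN v'
    have hsplit : ⟪T x₀, y⟫ = ⟪T v', y⟫ - ⟪T (Pn v'), y⟫ := by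
      rw [hx₀v', map_sub, inner_sub_left]
    have hzero1 : ⟪T (Pn v'), y⟫ = 0 := inner_orth (hT.1 (Pf_mem N hN v')) hyN
    have hzero2 : ⟪T v', y - Pm y⟫ = 0 := inner_orth (hT.2 hv'M) (sub_Pf_mem M hM y)
    have hTv' : ⟪T v', y⟫ = ⟪T v', Pm y⟫ := by
      have := inner_sub_right (𝕜 := ℂ) (T v') y (Pm y)
      rw [hzero2] at this
      linear_combination -this
    rw [hsplit, hzero1, sub_zero, hTv']
    calc ‖⟪T v', Pm y⟫‖ ≤ ‖T v'‖ * ‖Pm y‖ := norm_inner_le_norm _ _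
      _ ≤ ‖u‖ * ρ := by
          have b1 : ‖T v'‖ ≤ ‖v'‖ := by
            have := T.le_opNorm v'
            nlinarith [norm_nonneg v']
          have b2 : ‖v'‖ ≤ ‖u‖ := le_trans (norm_Pf_le M hM _) (norm_Pf_le Nᗮ N.isClosed_orthogonal u)
          have b3 : ‖Pm y‖ ≤ ρ := le_of_lt hys
          have := norm_nonneg (T v')
          have := norm_nonneg (Pm y)
          nlinarith [b1, b2, b3, norm_nonneg v', norm_nonneg u]
  -- the infimum is at least 1/2
  have hinf : 1/2 ≤ sInf {r : ℝ | ∃ L ∈ latOf (algOf N M), r = ‖x₀ - L x₀‖ ^ 2 + ‖L y‖ ^ 2} := by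
    apply le_inf
    intro L hL
    rcases dichot2 hL with hfixM | hkillN
    · rcases dichot1 hL with hfixN | hkillM
      · -- L = 1 on a dense subspace
        have hLy : L y = y := by
          have hcl : IsClosed {z : H | L z = z} := isClosed_eq L.continuous continuous_id
          have hsub : ((N ⊔ M : Submodule ℂ H) : Set H) ⊆ {z | L z = z} := by
            intro z hz
            obtain ⟨n, hn, m, hm, hnm⟩ := Submodule.mem_sup.1 hz
            have : L z = L n + L m := by rw [← hnm, map_add]
            rw [Set.mem_setOf_eq, this, hfixN n hn, hfixM m hm, hnm]
          have hdense : closure ((N ⊔ M : Submodule ℂ H) : Set H) = Set.univ := by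
            have horth : (N ⊔ M)ᗮ = ⊥ := by
              rw [Submodule.eq_bot_iff]
              intro v hv
              have h1 : v ∈ Nᗮ := by
                rw [Submodule.mem_orthogonal]
                intro z hz
                exact (Submodule.mem_orthogonal _ v).1 hv z (Submodule.mem_sup_left hz)
              have h2 : v ∈ Mᗮ := by
                rw [Submodule.mem_orthogonal]
                intro z hz
                exact (Submodule.mem_orthogonal _ v).1 hv z (Submodule.mem_sup_right hz)
              have : v ∈ Nᗮ ⊓ Mᗮ := ⟨h1, h2⟩
              rwa [hg₄, Submodule.mem_bot] at this
            have := Submodule.topologicalClosure_eq_top_iff.2 horth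
            calc closure ((N ⊔ M : Submodule ℂ H) : Set H)
                = ((N ⊔ M).topologicalClosure : Set H) :=
                  (Submodule.topologicalClosure_coe _).symm
              _ = Set.univ := by rw [this]; rfl
          have : y ∈ {z : H | L z = z} := by
            have h1 : y ∈ closure ((N ⊔ M : Submodule ℂ H) : Set H) := by
              rw [hdense]; trivial
            exact closure_minimal hsub hcl h1
          exact this
        have : ‖L y‖ ^ 2 = 1 := by rw [hLy, hy1]; norm_num
        nlinarith [sq_nonneg (‖x₀ - L x₀‖)]
      · -- L = Pm
        have hLPm : ∀ z : H, L z = Pm z := by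
          intro z
          have h1 : L z = L (Pm z) + L (z - Pm z) := by rw [← map_add]; congr 1; abel
          rw [h1, hfixM (Pm z) (Pf_mem M hM z), hkillM (z - Pm z) (sub_Pf_mem M hM z), add_zero]
        have : ‖x₀ - L x₀‖ ^ 2 = ‖x₀ - Pm x₀‖ ^ 2 := by rw [hLPm]
        nlinarith [sq_nonneg (‖L y‖), hdistM]
    · -- L kills Nᗮ
      have hLx₀ : L x₀ = 0 := hkillN x₀ hx₀N
      have : ‖x₀ - L x₀‖ ^ 2 = ‖x₀‖ ^ 2 := by rw [hLx₀, sub_zero]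
      nlinarith [sq_nonneg (‖L y‖), hx₀norm]
  -- contradiction
  have hfinal := hineq x₀ y
  have hbound : c * omegaNorm (algOf N M) x₀ y < 1/2 := by
    have h1 : c * omegaNorm (algOf N M) x₀ y ≤ c * (‖u‖ * ρ) :=
      mul_le_mul_of_nonneg_left homega hc.le
    have h2 : ρ ≤ 1/(2*(c+1)*(‖u‖+1)) := min_le_right _ _
    have h3 : c * (‖u‖ * ρ) < 1/2 := by
      have hA : (0:ℝ) < 2*(c+1)*(‖u‖+1) := by positivity
      have h4 : c * ‖u‖ * ρ ≤ c * ‖u‖ * (1/(2*(c+1)*(‖u‖+1))) := by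
        apply mul_le_mul_of_nonneg_left h2
        positivity
      have h5 : c * ‖u‖ * (1/(2*(c+1)*(‖u‖+1))) < 1/2 := by
        rw [mul_one_div, div_lt_iff₀ hA]
        nlinarith [norm_nonneg u, hc]
      nlinarith [h4, h5]
    nlinarith [h1, h3]
  linarith [hfinal, hinf, hbound]

/-! ### Closed sum implies property (V') -/

lemma core_arith {K W u v b b' a a' X Y : ℝ} (hK : 1 ≤ K) (hW : 0 < W)
    (h_i : u * b ≤ K * W) (h_ii : v * b' ≤ K * W) (h_iii : a ≤ v) (h_iv : a' ≤ u)
    (hu : 0 ≤ u) (hvn : 0 ≤ v) (hb : 0 ≤ b) (hb' : 0 ≤ b') (ha : 0 ≤ a) (ha' : 0 ≤ a')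
    (hX : X ≤ u + v) (hX0 : 0 ≤ X) (hY : Y ≤ (K+1)*(b+b')) (hY0 : 0 ≤ Y)
    (h1 : 4*(K+1)^2*W < X^2) (h2 : 4*(K+1)^2*W < Y^2)
    (h3 : 4*(K+1)^2*W < a^2+b^2) (h4 : 4*(K+1)^2*W < a'^2+b'^2)
    (hbb : b' ≤ b) : False := by
  have hK0 : (0:ℝ) < K := by linarith
  have hKp : (0:ℝ) < 4*(K+1)^2 := by positivity
  -- b is large
  have st1 : 4*(K+1)^2*W < 4*(K+1)^2*b^2 := by
    have hYsq : Y^2 ≤ ((K+1)*(b+b'))^2 := by nlinarith [mul_self_le_mul_self hY0 hY]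
    have e0 : ((K+1)*(b+b'))^2 ≤ 4*(K+1)^2*b^2 := by
      nlinarith [mul_nonneg (mul_nonneg (sq_nonneg (K+1)) (sub_nonneg.2 hbb))
        (show (0:ℝ) ≤ 3*b+b' by linarith)]
    linarith [h2, hYsq, e0]
  have stW : W < b^2 := lt_of_mul_lt_mul_left st1 hKp.le
  have hbpos : 0 < b := by nlinarith [hW, stW, hb]
  -- u is small
  have e2 : u^2 * b^2 ≤ K^2*W^2 := by nlinarith [h_i, mul_nonneg hu hb, mul_pos hK0 hW]
  have e3 : u^2 * W ≤ K^2 * W^2 := by nlinarith [stW, sq_nonneg u, e2]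
  have st3 : u^2 ≤ K^2*W := by
    have : u^2 * W ≤ (K^2*W) * W := by nlinarith [e3]
    exact le_of_mul_le_mul_right this hW
  have st4 : a'^2 ≤ K^2*W := by nlinarith [st3, h_iv, ha', hu]
  -- b' is large
  have st5 : 3*(K+1)^2*W < b'^2 := by nlinarith [h4, st4, hK]
  -- v is small
  have e4 : v^2*b'^2 ≤ K^2*W^2 := by nlinarith [h_ii, mul_nonneg hvn hb', mul_pos hK0 hW]
  have e5 : v^2 * (3*(K+1)^2*W) ≤ K^2*W^2 := by nlinarith [st5, sq_nonneg v, e4]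
  have st6 : 3*(K+1)^2*v^2 ≤ K^2*W := by
    have h6 : (3*(K+1)^2*v^2) * W ≤ (K^2*W) * W := by nlinarith [e5]
    exact le_of_mul_le_mul_right h6 hW
  have st6' : v^2 ≤ W := by nlinarith [st6, hW.le, hK, sq_nonneg v]
  have st7 : X^2 ≤ 2*u^2 + 2*v^2 := by nlinarith [hX, hX0, sq_nonneg (u - v), hu, hvn]
  nlinarith [h1, st3, st6', st7, hW, hK]

lemma algOf_comm (N M : Submodule ℂ H) : algOf M N = algOf N M := by
  ext T; exact and_comm

lemma rankone_est {N M : Submodule ℂ H} (hN : IsClosed (N : Set H)) (G : H →L[ℂ] H) {K : ℝ}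
    (hGK : ‖G‖ ≤ K) (hKpos : 0 < K) (hGM : ∀ m ∈ M, G m = 0) (x y : H) :
    ‖G x‖ * ‖Pf N hN y‖ ≤ K * omegaNorm (algOf N M) x y := by
  have hWnn : 0 ≤ omegaNorm (algOf N M) x y := omega_nonneg (zero_mem_alg N M) x y
  by_cases hzero : ‖G x‖ * ‖Pf N hN y‖ = 0
  · rw [hzero]; positivity
  · have hq : 0 < ‖G x‖ :=
      lt_of_le_of_ne (norm_nonneg _) (fun h => hzero (by rw [← h]; ring))
    have hbp : 0 < ‖Pf N hN y‖ := by
      rcases lt_or_eq_of_le (norm_nonneg (Pf N hN y)) with h | h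
      · exact h
      · exact absurd (by rw [← h]; ring) hzero
    set t : ℝ := (K * ‖G x‖ * ‖Pf N hN y‖)⁻¹ with htdef
    have htpos : 0 < t := by rw [htdef]; positivity
    set S₀ : H →L[ℂ] H := (t : ℂ) • ((rk (G x) (Pf N hN y)) ∘L G) with hS₀def
    have hS₀mem : S₀ ∈ algOf N M := by
      constructor
      · intro z _
        show S₀ z ∈ N
        rw [hS₀def]
        simp only [ContinuousLinearMap.smul_apply, ContinuousLinearMap.comp_apply, rk_apply]
        exact Submodule.smul_mem _ _ (Submodule.smul_mem _ _ (Pf_mem N hN y))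
      · intro z hz
        show S₀ z ∈ M
        rw [hS₀def]
        simp only [ContinuousLinearMap.smul_apply, ContinuousLinearMap.comp_apply, rk_apply,
          hGM z hz, inner_zero_right, zero_smul, smul_zero]
        exact Submodule.zero_mem M
    have hS₀norm : ‖S₀‖ ≤ 1 := by
      have hn1 : ‖S₀‖ ≤ t * (‖G x‖ * ‖Pf N hN y‖ * ‖G‖) := by
        rw [hS₀def]
        calc ‖(t : ℂ) • ((rk (G x) (Pf N hN y)) ∘L G)‖
            = ‖(t : ℂ)‖ * ‖(rk (G x) (Pf N hN y)) ∘L G‖ := norm_smul _ _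
          _ ≤ t * (‖G x‖ * ‖Pf N hN y‖ * ‖G‖) := by
              have c1 : ‖(t:ℂ)‖ = t := by
                rw [Complex.norm_real]; exact abs_of_pos htpos
              have c2 : ‖(rk (G x) (Pf N hN y)) ∘L G‖ ≤ (‖G x‖ * ‖Pf N hN y‖) * ‖G‖ := by
                calc ‖(rk (G x) (Pf N hN y)) ∘L G‖ ≤ ‖rk (G x) (Pf N hN y)‖ * ‖G‖ :=
                    ContinuousLinearMap.opNorm_comp_le _ _
                  _ ≤ (‖G x‖ * ‖Pf N hN y‖) * ‖G‖ := by
                      have := norm_rk_le (G x) (Pf N hN y)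
                      nlinarith [norm_nonneg G]
              rw [c1]
              nlinarith [c2, htpos]
      have heqt : t * (‖G x‖ * ‖Pf N hN y‖ * ‖G‖) = ‖G‖ / K := by
        rw [htdef]
        field_simp
      rw [heqt] at hn1
      have : ‖G‖ / K ≤ 1 := by
        rw [div_le_one hKpos]
        exact hGK
      linarith
    have hval : ‖(inner ℂ (S₀ x) y : ℂ)‖ = t * (‖G x‖^2 * ‖Pf N hN y‖^2) := by
      have hSx : (inner ℂ (S₀ x) y : ℂ) = ((t * (‖G x‖^2 * ‖Pf N hN y‖^2) : ℝ) : ℂ) := by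
        rw [hS₀def]
        simp only [ContinuousLinearMap.smul_apply, ContinuousLinearMap.comp_apply, rk_apply]
        rw [inner_smul_left, inner_smul_left, inner_self_c, inner_Pf N hN y]
        simp only [map_pow, map_mul, Complex.conj_ofReal]
        push_cast
        ring
      rw [hSx, Complex.norm_real]
      exact abs_of_nonneg (by positivity)
    have hle := le_omega hS₀mem hS₀norm x y
    rw [hval] at hle
    calc ‖G x‖ * ‖Pf N hN y‖ = K * (t * (‖G x‖^2 * ‖Pf N hN y‖^2)) := by
          rw [htdef]; field_simp
      _ ≤ K * omegaNorm (algOf N M) x y := mul_le_mul_of_nonneg_left hle hKpos.le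

lemma y_control {N M : Submodule ℂ H} (hN : IsClosed (N : Set H)) (hM : IsClosed (M : Set H))
    (Q : H →L[ℂ] H) {K : ℝ} (hQK : ‖Q‖ ≤ K) (hQmem : ∀ z : H, Q z ∈ N)
    (hsubQ : ∀ z : H, z - Q z ∈ M) (y : H) :
    ‖y‖ ≤ (K+1) * (‖Pf N hN y‖ + ‖Pf M hM y‖) := by
  haveI := hN.completeSpace_coe
  haveI := hM.completeSpace_coe
  set Qa : H →L[ℂ] H := ContinuousLinearMap.adjoint Q with hQadef
  have hQanorm : ‖Qa‖ = ‖Q‖ := ContinuousLinearMap.adjoint.norm_map Q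
  set p : H := y - Pf N hN y with hpdef
  set q' : H := y - Pf M hM y with hq'def
  have hpN : p ∈ Nᗮ := sub_Pf_mem N hN y
  have hq'M : q' ∈ Mᗮ := sub_Pf_mem M hM y
  have hQap : Qa p = 0 := by
    refine ext_inner_right ℂ (fun z => ?_)
    rw [hQadef, ContinuousLinearMap.adjoint_inner_left Q z p, inner_zero_left]
    exact inner_orth' hpN (hQmem z)
  have hQaq : Qa q' = q' := by
    refine ext_inner_right ℂ (fun z => ?_)
    rw [hQadef, ContinuousLinearMap.adjoint_inner_left Q z q']
    have hz2 : (inner ℂ q' (z - Q z) : ℂ) = 0 := inner_orth' hq'M (hsubQ z)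
    have := inner_sub_right (𝕜 := ℂ) q' z (Q z)
    rw [hz2] at this
    linear_combination this
  have hrepr : q' = Qa (q' - p) := by
    rw [map_sub, hQap, hQaq, sub_zero]
  have hnorm1 : ‖q'‖ ≤ ‖Q‖ * (‖Pf N hN y‖ + ‖Pf M hM y‖) := by
    calc ‖q'‖ = ‖Qa (q' - p)‖ := by rw [← hrepr]
      _ ≤ ‖Qa‖ * ‖q' - p‖ := Qa.le_opNorm _
      _ ≤ ‖Q‖ * (‖Pf N hN y‖ + ‖Pf M hM y‖) := by
          have e1 : q' - p = Pf N hN y - Pf M hM y := by rw [hq'def, hpdef]; abel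
          have e2 : ‖q' - p‖ ≤ ‖Pf N hN y‖ + ‖Pf M hM y‖ := by
            rw [e1]; exact norm_sub_le _ _
          rw [hQanorm]
          nlinarith [norm_nonneg Q, norm_nonneg (q' - p)]
  have hy2 : ‖y‖ ≤ ‖q'‖ + ‖Pf M hM y‖ := by
    have he : y = q' + Pf M hM y := by rw [hq'def]; abel
    calc ‖y‖ = ‖q' + Pf M hM y‖ := by rw [← he]
      _ ≤ ‖q'‖ + ‖Pf M hM y‖ := norm_add_le _ _
  nlinarith [hnorm1, hy2, norm_nonneg (Pf N hN y), norm_nonneg (Pf M hM y),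
    norm_nonneg Q, hQK]

lemma V'_of_closed {N M : Submodule ℂ H} (hN : IsClosed (N : Set H))
    (hM : IsClosed (M : Set H)) (hg₁ : N ⊓ M = ⊥) (hg₄ : Nᗮ ⊓ Mᗮ = ⊥)
    (hcl : IsClosed ((N ⊔ M : Submodule ℂ H) : Set H)) :
    PropertyV' (algOf N M) := by
  haveI := hN.completeSpace_coe
  haveI := hM.completeSpace_coe
  -- N and M are complementary
  have htop : N ⊔ M = ⊤ := by
    have horth : (N ⊔ M)ᗮ = ⊥ := by
      rw [Submodule.eq_bot_iff]
      intro v hv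
      have h1 : v ∈ Nᗮ := by
        rw [Submodule.mem_orthogonal]
        intro z hz
        exact (Submodule.mem_orthogonal _ v).1 hv z (Submodule.mem_sup_left hz)
      have h2 : v ∈ Mᗮ := by
        rw [Submodule.mem_orthogonal]
        intro z hz
        exact (Submodule.mem_orthogonal _ v).1 hv z (Submodule.mem_sup_right hz)
      have : v ∈ Nᗮ ⊓ Mᗮ := ⟨h1, h2⟩
      rwa [hg₄, Submodule.mem_bot] at this
    have hc2 : (N ⊔ M).topologicalClosure = ⊤ :=
      Submodule.topologicalClosure_eq_top_iff.2 horth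
    have heq : (N ⊔ M).topologicalClosure = N ⊔ M :=
      le_antisymm (Submodule.topologicalClosure_minimal _ le_rfl hcl)
        (Submodule.le_topologicalClosure _)
    rw [← heq, hc2]
  have hcompl : IsCompl N M := ⟨disjoint_iff.2 hg₁, codisjoint_iff.2 htop⟩
  set Q : H →L[ℂ] H := N.subtypeL ∘L (N.linearProjOfClosedCompl M hcompl hN hM) with hQdef
  have hQmem : ∀ z : H, Q z ∈ N := fun z => ((N.linearProjOfClosedCompl M hcompl hN hM) z).2
  have hQN : ∀ n ∈ N, Q n = n := by
    intro n hn
    have h1 : Q n = ((N.projectionOnto M hcompl) n : H) := by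
      rw [hQdef]
      simp [ContinuousLinearMap.comp_apply,
        Submodule.coe_continuous_linearProjOfClosedCompl']
    rw [h1, Submodule.projectionOnto_apply_left hcompl ⟨n, hn⟩]
  have hQM : ∀ m ∈ M, Q m = 0 := by
    intro m hm
    have h1 : Q m = ((N.projectionOnto M hcompl) m : H) := by
      rw [hQdef]
      simp [ContinuousLinearMap.comp_apply,
        Submodule.coe_continuous_linearProjOfClosedCompl']
    rw [h1, Submodule.projectionOnto_apply_of_mem_right hcompl hm]
    rfl
  have hsubQ : ∀ z : H, z - Q z ∈ M := by
    intro z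
    have hz : z ∈ N ⊔ M := htop ▸ Submodule.mem_top
    obtain ⟨n, hn, m, hm, hnm⟩ := Submodule.mem_sup.1 hz
    have hQz : Q z = n := by
      rw [← hnm, map_add, hQN n hn, hQM m hm, add_zero]
    rw [hQz, ← hnm]
    simpa using hm
  clear_value Q
  clear hQdef
  have hsubQ' : ∀ n ∈ N, (1 - Q) n = 0 := by
    intro n hn
    simp only [ContinuousLinearMap.sub_apply, ContinuousLinearMap.one_apply, hQN n hn, sub_self]
  set K : ℝ := ‖Q‖ + ‖1 - Q‖ + 1 with hKdef
  have hK1 : 1 ≤ K := by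
    have := norm_nonneg Q
    have := norm_nonneg (1 - Q)
    rw [hKdef]; linarith
  have hQK : ‖Q‖ ≤ K := by
    have := norm_nonneg (1 - Q)
    rw [hKdef]; linarith
  have h1QK : ‖1 - Q‖ ≤ K := by
    have := norm_nonneg Q
    rw [hKdef]; linarith
  have hKpos : (0:ℝ) < K := by linarith
  clear_value K
  clear hKdef
  refine ⟨4*(K+1)^2, by positivity, ?_⟩
  intro x y
  set W : ℝ := omegaNorm (algOf N M) x y with hWdef
  have hWnn : 0 ≤ W := omega_nonneg (zero_mem_alg N M) x y
  -- rank-one estimates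
  have key1 : ‖Q x‖ * ‖Pf N hN y‖ ≤ K * W :=
    rankone_est hN Q hQK hKpos hQM x y
  have key2 : ‖(1 - Q) x‖ * ‖Pf M hM y‖ ≤ K * W := by
    have h := rankone_est (N := M) (M := N) hM (1 - Q) h1QK hKpos hsubQ' x y
    rwa [algOf_comm N M] at h
  have key2' : ‖x - Q x‖ * ‖Pf M hM y‖ ≤ K * W := by
    have : (1 - Q) x = x - Q x := by
      simp [ContinuousLinearMap.sub_apply, ContinuousLinearMap.one_apply]
    rwa [this] at key2
  clear key2
  -- distance minimality
  have hiii : ‖x - Pf N hN x‖ ≤ ‖x - Q x‖ := Pf_min N hN (hQmem x) x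
  have hiv : ‖x - Pf M hM x‖ ≤ ‖Q x‖ := by
    have := Pf_min M hM (hsubQ x) x
    simpa using this
  have hyK : ‖y‖ ≤ (K+1) * (‖Pf N hN y‖ + ‖Pf M hM y‖) :=
    y_control hN hM Q hQK hQmem hsubQ y
  by_contra hcon
  push_neg at hcon
  have hv1 : 4*(K+1)^2*W < ‖x‖^2 := by
    have h := inf_le_val (zero_mem_lat (algOf N M)) x y
    simp only [ContinuousLinearMap.zero_apply, sub_zero, norm_zero] at h
    calc 4*(K+1)^2*W < _ := hcon
      _ ≤ _ := h
      _ ≤ ‖x‖^2 := by norm_num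
  have hv2 : 4*(K+1)^2*W < ‖y‖^2 := by
    have h := inf_le_val (one_mem_lat (algOf N M)) x y
    simp only [ContinuousLinearMap.one_apply, sub_self, norm_zero] at h
    calc 4*(K+1)^2*W < _ := hcon
      _ ≤ _ := h
      _ ≤ ‖y‖^2 := by norm_num
  have hv3 : 4*(K+1)^2*W < ‖x - Pf N hN x‖^2 + ‖Pf N hN y‖^2 :=
    lt_of_lt_of_le hcon (inf_le_val (PfN_mem_lat N M hN) x y)
  have hv4 : 4*(K+1)^2*W < ‖x - Pf M hM x‖^2 + ‖Pf M hM y‖^2 :=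
    lt_of_lt_of_le hcon (inf_le_val (PfM_mem_lat N M hM) x y)
  clear hcon
  -- the W = 0 case
  rcases eq_or_lt_of_le hWnn with hW0 | hWpos
  · have key1' : ‖Q x‖ * ‖Pf N hN y‖ = 0 := by
      have h1 : ‖Q x‖ * ‖Pf N hN y‖ ≤ 0 := by rw [← hW0, mul_zero] at key1; exact key1
      have h2 : 0 ≤ ‖Q x‖ * ‖Pf N hN y‖ := by positivity
      linarith
    have key2'' : ‖x - Q x‖ * ‖Pf M hM y‖ = 0 := by
      have h1 : ‖x - Q x‖ * ‖Pf M hM y‖ ≤ 0 := by rw [← hW0, mul_zero] at key2'; exact key2'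
      have h2 : 0 ≤ ‖x - Q x‖ * ‖Pf M hM y‖ := by positivity
      linarith
    have hv1' : 0 < ‖x‖^2 := by rw [← hW0, mul_zero] at hv1; exact hv1
    have hv2' : 0 < ‖y‖^2 := by rw [← hW0, mul_zero] at hv2; exact hv2
    have hv3' : 0 < ‖x - Pf N hN x‖^2 + ‖Pf N hN y‖^2 := by
      rw [← hW0, mul_zero] at hv3; exact hv3
    have hv4' : 0 < ‖x - Pf M hM x‖^2 + ‖Pf M hM y‖^2 := by
      rw [← hW0, mul_zero] at hv4; exact hv4
    have hxQ : ‖x‖ ≤ ‖Q x‖ + ‖x - Q x‖ := by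
      calc ‖x‖ = ‖Q x + (x - Q x)‖ := by congr 1; abel
        _ ≤ _ := norm_add_le _ _
    rcases mul_eq_zero.1 key1' with hQx0 | hb0
    · rcases mul_eq_zero.1 key2'' with hvv0 | hb'0
      · nlinarith [hxQ, hv1', hQx0, hvv0, norm_nonneg x]
      · nlinarith [hv4', hiv, hQx0, hb'0, norm_nonneg (x - Pf M hM x)]
    · rcases mul_eq_zero.1 key2'' with hvv0 | hb'0
      · nlinarith [hv3', hiii, hb0, hvv0, norm_nonneg (x - Pf N hN x)]
      · rw [hb0, hb'0] at hyK
        norm_num at hyK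
        rw [hyK] at hv2'
        simp at hv2'
  -- main case: W > 0
  · rcases le_total (‖Pf M hM y‖) (‖Pf N hN y‖) with hbb | hbb
    · refine core_arith hK1 hWpos key1 key2' hiii hiv (norm_nonneg _) (norm_nonneg _)
        (norm_nonneg _) (norm_nonneg _) (norm_nonneg _) (norm_nonneg _)
        ?_ (norm_nonneg _) hyK (norm_nonneg _) hv1 hv2 hv3 hv4 hbb
      calc ‖x‖ = ‖Q x + (x - Q x)‖ := by congr 1; abel
        _ ≤ _ := norm_add_le _ _
    · refine core_arith hK1 hWpos key2' key1 hiv hiii (norm_nonneg _) (norm_nonneg _)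
        (norm_nonneg _) (norm_nonneg _) (norm_nonneg _) (norm_nonneg _)
        ?_ (norm_nonneg _) ?_ (norm_nonneg _) hv1 hv2 hv4 hv3 hbb
      · calc ‖x‖ = ‖(x - Q x) + Q x‖ := by congr 1; abel
          _ ≤ _ := norm_add_le _ _
      · calc ‖y‖ ≤ (K+1) * (‖Pf N hN y‖ + ‖Pf M hM y‖) := hyK
          _ = (K+1) * (‖Pf M hM y‖ + ‖Pf N hN y‖) := by ring

end Stmt17

/-- For closed subspaces `N, M` of `H` in generic position, the algebra
`𝓐` of operators leaving both `N` and `M` invariant satisfies property (V') if and only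
if the algebraic sum `N + M` is closed. -/
theorem norms_of_vector_functionals_stmt17
    (N M : Submodule ℂ H) (hN : IsClosed (N : Set H)) (hM : IsClosed (M : Set H))
    (hg₁ : N ⊓ M = ⊥) (hg₂ : Nᗮ ⊓ M = ⊥) (hg₃ : N ⊓ Mᗮ = ⊥) (hg₄ : Nᗮ ⊓ Mᗮ = ⊥) :
    PropertyV' {T : H →L[ℂ] H |
        Set.MapsTo T (N : Set H) (N : Set H) ∧ Set.MapsTo T (M : Set H) (M : Set H)} ↔
      IsClosed ((N ⊔ M : Submodule ℂ H) : Set H) := by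
  constructor
  · intro hV
    by_contra hnc
    exact Stmt17.not_V'_of_not_closed hN hM hg₄ hnc hV
  · intro hcl
    exact Stmt17.V'_of_closed hN hM hg₁ hg₄ hcl
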